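/- Summability of squared gradient norms for gradient descent on the exponential loss: if the fixed step size satisfies 0 < η < 1/L(w(0)), then for every t ≥ 0, Σ_{i=0}^{t} ‖∇L(w(i))‖² ≤ (L(w(0)) − L(w(t+1))) / (η(1 − (η/2)L(w(0)))); in particular Σ_{i=0}^{∞} ‖∇L(w(i))‖² ≤ L(w(0)) / (η(1 − (η/2)L(w(0)))) < ∞. -/

import Mathlib

open scoped RealInnerProductSpace BigOperators
open Filter

/-- The exponential loss `L(w) = ∑ₙ exp(-⟨w, xₙ⟩)`. -/
noncomputable def expLoss {d N : ℕ} (x : Fin N → EuclideanSpace ℝ (Fin d))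
    (w : EuclideanSpace ℝ (Fin d)) : ℝ :=
  ∑ n, Real.exp (-⟪w, x n⟫)

/-- The gradient of the exponential loss, `∇L(w) = -∑ₙ exp(-⟨w, xₙ⟩) xₙ`. -/
noncomputable def expLossGrad {d N : ℕ} (x : Fin N → EuclideanSpace ℝ (Fin d))
    (w : EuclideanSpace ℝ (Fin d)) : EuclideanSpace ℝ (Fin d) :=
  -∑ n, Real.exp (-⟪w, x n⟫) • x n

private lemma sum_exp_hasDerivAt {N : ℕ} (a b : Fin N → ℝ) (s : ℝ) :
    HasDerivAt (fun s => ∑ n, Real.exp (a n + s * b n))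
      (∑ n, b n * Real.exp (a n + s * b n)) s := by
  apply HasDerivAt.fun_sum
  intro n _
  have h : HasDerivAt (fun s : ℝ => a n + s * b n) (b n) s := by
    simpa using ((hasDerivAt_id s).mul_const (b n)).const_add (a n)
  simpa [mul_comm] using h.exp

private lemma sum_exp_hasDerivAt' {N : ℕ} (a b : Fin N → ℝ) (s : ℝ) :
    HasDerivAt (fun s => ∑ n, b n * Real.exp (a n + s * b n))
      (∑ n, (b n) ^ 2 * Real.exp (a n + s * b n)) s := by
  apply HasDerivAt.fun_sum
  intro n _
  have h : HasDerivAt (fun s : ℝ => a n + s * b n) (b n) s := by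
    simpa using ((hasDerivAt_id s).mul_const (b n)).const_add (a n)
  have := h.exp.const_mul (b n)
  refine this.congr_deriv ?_
  ring

/-- endpoint convexity bound: `φ(s) ≤ max (φ 0) (φ 1)` on `[0,1]`. -/
private lemma sum_exp_le_max {N : ℕ} (a b : Fin N → ℝ) {s : ℝ} (hs : s ∈ Set.Icc (0:ℝ) 1) :
    ∑ n, Real.exp (a n + s * b n) ≤
      max (∑ n, Real.exp (a n + 0 * b n)) (∑ n, Real.exp (a n + 1 * b n)) := by
  obtain ⟨hs0, hs1⟩ := hs
  have key : ∀ n : Fin N, Real.exp (a n + s * b n) ≤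
      (1 - s) * Real.exp (a n + 0 * b n) + s * Real.exp (a n + 1 * b n) := by
    intro n
    have := convexOn_exp.2 (Set.mem_univ (a n + 0 * b n)) (Set.mem_univ (a n + 1 * b n))
      (by linarith : (0:ℝ) ≤ 1 - s) hs0 (by ring)
    have harg : (1 - s) • (a n + 0 * b n) + s • (a n + 1 * b n) = a n + s * b n := by
      simp only [smul_eq_mul]; ring
    rw [harg] at this
    simpa [smul_eq_mul] using this
  calc ∑ n, Real.exp (a n + s * b n)
      ≤ ∑ n, ((1 - s) * Real.exp (a n + 0 * b n) + s * Real.exp (a n + 1 * b n)) :=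
        Finset.sum_le_sum fun n _ => key n
    _ = (1 - s) * (∑ n, Real.exp (a n + 0 * b n)) + s * (∑ n, Real.exp (a n + 1 * b n)) := by
        rw [Finset.sum_add_distrib, Finset.mul_sum, Finset.mul_sum]
    _ ≤ (1 - s) * max (∑ n, Real.exp (a n + 0 * b n)) (∑ n, Real.exp (a n + 1 * b n))
        + s * max (∑ n, Real.exp (a n + 0 * b n)) (∑ n, Real.exp (a n + 1 * b n)) := by
        gcongr
        · exact le_max_left _ _
        · exact le_max_right _ _
    _ = max (∑ n, Real.exp (a n + 0 * b n)) (∑ n, Real.exp (a n + 1 * b n)) := by ring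

/-- Taylor-type bound with second derivative bounded on `[0,1]`. -/
private lemma taylor_le {N : ℕ} (a b : Fin N → ℝ) {C : ℝ}
    (hC : ∀ s ∈ Set.Icc (0:ℝ) 1, ∑ n, (b n) ^ 2 * Real.exp (a n + s * b n) ≤ C) :
    ∑ n, Real.exp (a n + 1 * b n) ≤
      (∑ n, Real.exp (a n + 0 * b n)) + (∑ n, b n * Real.exp (a n + 0 * b n)) + C / 2 := by
  set φ₁ : ℝ → ℝ := fun s => ∑ n, b n * Real.exp (a n + s * b n) with hφ₁
  -- step 1 : φ₁ s ≤ φ₁ 0 + C * s  on [0,1]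
  have hmono1 : MonotoneOn (fun s => φ₁ 0 + C * s - φ₁ s) (Set.Icc (0:ℝ) 1) := by
    apply monotoneOn_of_deriv_nonneg (convex_Icc 0 1)
    · have hcont : Continuous fun s : ℝ => ∑ n, b n * Real.exp (a n + s * b n) := by
        continuity
      exact ((continuous_const.add (continuous_const.mul continuous_id)).sub
        hcont).continuousOn
    · intro s _
      exact (((hasDerivAt_const s (φ₁ 0)).add ((hasDerivAt_id s).const_mul C)).sub
        (sum_exp_hasDerivAt' a b s)).differentiableAt.differentiableWithinAt
    · intro s hs
      rw [interior_Icc] at hs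
      have hd : HasDerivAt (fun s => φ₁ 0 + C * s - φ₁ s)
          (C - ∑ n, (b n) ^ 2 * Real.exp (a n + s * b n)) s := by
        have := ((hasDerivAt_const s (φ₁ 0)).add ((hasDerivAt_id s).const_mul C)).sub
          (sum_exp_hasDerivAt' a b s)
        exact this.congr_deriv (by simp)
      rw [hd.deriv]
      have := hC s ⟨hs.1.le, hs.2.le⟩
      linarith
  have h1 : ∀ s ∈ Set.Icc (0:ℝ) 1, φ₁ s ≤ φ₁ 0 + C * s := by
    intro s hs
    have := hmono1 (Set.left_mem_Icc.2 zero_le_one) hs hs.1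
    simp only [mul_zero] at this
    linarith
  -- step 2 : ψ monotone
  set ψ : ℝ → ℝ := fun s => (∑ n, Real.exp (a n + 0 * b n)) + s * φ₁ 0 + C * s ^ 2 / 2
    - ∑ n, Real.exp (a n + s * b n) with hψ
  have hmono2 : MonotoneOn ψ (Set.Icc (0:ℝ) 1) := by
    apply monotoneOn_of_deriv_nonneg (convex_Icc 0 1)
    · apply Continuous.continuousOn
      have : Continuous fun s : ℝ => ∑ n, Real.exp (a n + s * b n) := by
        continuity
      fun_prop
    · intro s _
      have hd : HasDerivAt ψ (φ₁ 0 + C * s - φ₁ s) s := by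
        have h2 : HasDerivAt (fun s : ℝ => (∑ n, Real.exp (a n + 0 * b n)) + s * φ₁ 0
            + C * s ^ 2 / 2) (φ₁ 0 + C * s) s := by
          have := (((hasDerivAt_id s).mul_const (φ₁ 0)).const_add
            (∑ n, Real.exp (a n + 0 * b n))).add
            (((hasDerivAt_pow 2 s).const_mul C).div_const 2)
          refine this.congr_deriv ?_
          ring
        exact h2.sub (sum_exp_hasDerivAt a b s)
      exact hd.differentiableAt.differentiableWithinAt
    · intro s hs
      rw [interior_Icc] at hs
      have hd : HasDerivAt ψ (φ₁ 0 + C * s - φ₁ s) s := by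
        have h2 : HasDerivAt (fun s : ℝ => (∑ n, Real.exp (a n + 0 * b n)) + s * φ₁ 0
            + C * s ^ 2 / 2) (φ₁ 0 + C * s) s := by
          have := (((hasDerivAt_id s).mul_const (φ₁ 0)).const_add
            (∑ n, Real.exp (a n + 0 * b n))).add
            (((hasDerivAt_pow 2 s).const_mul C).div_const 2)
          refine this.congr_deriv ?_
          ring
        exact h2.sub (sum_exp_hasDerivAt a b s)
      rw [hd.deriv]
      have := h1 s ⟨hs.1.le, hs.2.le⟩
      linarith
  have h01 : ψ 0 ≤ ψ 1 :=
    hmono2 (Set.left_mem_Icc.2 zero_le_one) (Set.right_mem_Icc.2 zero_le_one) zero_le_one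
  have eψ0 : ψ 0 = 0 := by simp only [hψ]; ring
  have eψ1 : ψ 1 = (∑ n, Real.exp (a n + 0 * b n))
      + (∑ n, b n * Real.exp (a n + 0 * b n)) + C / 2 - ∑ n, Real.exp (a n + 1 * b n) := by
    simp only [hψ, hφ₁]; ring
  rw [eψ0, eψ1] at h01
  linarith

/-- The purely real one-step inequality. -/
private lemma step_ineq {A B G η L₀ : ℝ} (hη : 0 < η) (hL : η * L₀ < 1)
    (hA0 : 0 ≤ A) (hA : A ≤ L₀) (hG : 0 ≤ G) (hGA : G ≤ A ^ 2)
    (hT : B ≤ A - η * G + η ^ 2 * G / 2 * max A B) :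
    B ≤ A - η * (1 - η / 2 * L₀) * G := by
  have hL0 : 0 ≤ L₀ := le_trans hA0 hA
  rcases le_total B A with h | h
  · rw [max_eq_left h] at hT
    nlinarith [mul_nonneg hη.le hG, mul_nonneg (mul_nonneg hη.le hη.le) hG,
      mul_nonneg (mul_nonneg (mul_nonneg hη.le hη.le) hG) (sub_nonneg.2 hA)]
  · rw [max_eq_right h] at hT
    have hηA : η * A ≤ η * L₀ := by nlinarith
    have hηA0 : 0 ≤ η * A := mul_nonneg hη.le hA0
    have hq : η ^ 2 * G ≤ (η * A) ^ 2 := by nlinarith [sq_nonneg η]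
    have hq2 : (η * A) ^ 2 ≤ (η * L₀) ^ 2 := by nlinarith
    have hq3 : (η * L₀) ^ 2 < 1 := by nlinarith
    have h1 : η ^ 2 * G < 1 := by linarith
    have hpos2 : 0 < 1 - η ^ 2 * G / 2 := by linarith
    have hB : B * (1 - η ^ 2 * G / 2) ≤ A - η * G := by nlinarith [hT]
    have key : A - η * G ≤ (A - η * (1 - η / 2 * A) * G) * (1 - η ^ 2 * G / 2) := by
      nlinarith [mul_nonneg (mul_nonneg (mul_nonneg (mul_nonneg hη.le hη.le) hη.le)
        (mul_nonneg hG hG)) (by linarith : (0:ℝ) ≤ 2 - η * A)]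
    have hBle : B ≤ A - η * (1 - η / 2 * A) * G :=
      (mul_le_mul_iff_of_pos_right hpos2).1 (hB.trans key)
    nlinarith [mul_nonneg (mul_nonneg (mul_nonneg hη.le hη.le) hG) (sub_nonneg.2 hA)]

private lemma expLoss_nonneg {d N : ℕ} (x : Fin N → EuclideanSpace ℝ (Fin d))
    (w : EuclideanSpace ℝ (Fin d)) : 0 ≤ expLoss x w :=
  Finset.sum_nonneg fun _ _ => (Real.exp_pos _).le

private lemma norm_expLossGrad_le {d N : ℕ} (x : Fin N → EuclideanSpace ℝ (Fin d))
    (hx : ∀ n, ‖x n‖ ≤ 1) (w : EuclideanSpace ℝ (Fin d)) :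
    ‖expLossGrad x w‖ ≤ expLoss x w := by
  rw [expLossGrad, norm_neg]
  calc ‖∑ n, Real.exp (-⟪w, x n⟫) • x n‖ ≤ ∑ n, ‖Real.exp (-⟪w, x n⟫) • x n‖ :=
        norm_sum_le _ _
    _ ≤ ∑ n, Real.exp (-⟪w, x n⟫) := by
        apply Finset.sum_le_sum
        intro n _
        rw [norm_smul, Real.norm_eq_abs, abs_of_pos (Real.exp_pos _)]
        calc Real.exp (-⟪w, x n⟫) * ‖x n‖ ≤ Real.exp (-⟪w, x n⟫) * 1 := by
              exact mul_le_mul_of_nonneg_left (hx n) (Real.exp_pos _).le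
          _ = Real.exp (-⟪w, x n⟫) := mul_one _
    _ = expLoss x w := rfl

/-- One step of gradient descent decreases the loss by `c·‖∇L‖²`. -/
private lemma descent_step {d N : ℕ} (x : Fin N → EuclideanSpace ℝ (Fin d))
    (hx : ∀ n, ‖x n‖ ≤ 1) {η L₀ : ℝ} (hη : 0 < η) (hL : η * L₀ < 1)
    (w : EuclideanSpace ℝ (Fin d)) (hw : expLoss x w ≤ L₀) :
    expLoss x (w - η • expLossGrad x w) ≤
      expLoss x w - η * (1 - η / 2 * L₀) * ‖expLossGrad x w‖ ^ 2 := by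
  set g := expLossGrad x w with hg
  set a : Fin N → ℝ := fun n => -⟪w, x n⟫ with ha
  set b : Fin N → ℝ := fun n => η * ⟪g, x n⟫ with hb
  have e0 : expLoss x w = ∑ n, Real.exp (a n + 0 * b n) := by
    simp [expLoss, ha]
  have e1 : expLoss x (w - η • g) = ∑ n, Real.exp (a n + 1 * b n) := by
    unfold expLoss
    congr 1
    funext n
    congr 1
    rw [inner_sub_left, real_inner_smul_left]
    simp [ha, hb]
    ring
  have e2 : ∑ n, b n * Real.exp (a n + 0 * b n) = -(η * ‖g‖ ^ 2) := by
    have hsum : ∑ n, Real.exp (a n) • x n = -g := by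
      simp [hg, expLossGrad, ha]
    have : ∑ n, b n * Real.exp (a n + 0 * b n) = η * ⟪g, ∑ n, Real.exp (a n) • x n⟫ := by
      rw [inner_sum, Finset.mul_sum]
      congr 1
      funext n
      rw [real_inner_smul_right]
      simp [hb]
      ring
    rw [this, hsum, inner_neg_right, real_inner_self_eq_norm_sq]
    ring
  have hb2 : ∀ n, (b n) ^ 2 ≤ η ^ 2 * ‖g‖ ^ 2 := by
    intro n
    have h1 : |⟪g, x n⟫| ≤ ‖g‖ * ‖x n‖ := abs_real_inner_le_norm g (x n)
    have h2 : ‖g‖ * ‖x n‖ ≤ ‖g‖ * 1 := mul_le_mul_of_nonneg_left (hx n) (norm_nonneg _)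
    have h3 : |⟪g, x n⟫| ≤ ‖g‖ := by linarith
    have h5 := abs_le.1 h3
    have h4 : ⟪g, x n⟫ ^ 2 ≤ ‖g‖ ^ 2 := by nlinarith [h5.1, h5.2]
    simp only [hb]
    nlinarith [mul_le_mul_of_nonneg_left h4 (sq_nonneg η)]
  set M := max (expLoss x w) (expLoss x (w - η • g)) with hM
  have hC : ∀ s ∈ Set.Icc (0:ℝ) 1,
      ∑ n, (b n) ^ 2 * Real.exp (a n + s * b n) ≤ η ^ 2 * ‖g‖ ^ 2 * M := by
    intro s hs
    calc ∑ n, (b n) ^ 2 * Real.exp (a n + s * b n)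
        ≤ ∑ n, η ^ 2 * ‖g‖ ^ 2 * Real.exp (a n + s * b n) :=
          Finset.sum_le_sum fun n _ =>
            mul_le_mul_of_nonneg_right (hb2 n) (Real.exp_pos _).le
      _ = η ^ 2 * ‖g‖ ^ 2 * ∑ n, Real.exp (a n + s * b n) := by rw [Finset.mul_sum]
      _ ≤ η ^ 2 * ‖g‖ ^ 2 * M := by
          apply mul_le_mul_of_nonneg_left _ (by positivity)
          rw [hM, e0, e1]
          exact sum_exp_le_max a b hs
  have hT := taylor_le a b hC
  rw [← e0, ← e1, e2] at hT
  have hGA : ‖g‖ ^ 2 ≤ (expLoss x w) ^ 2 := by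
    have := norm_expLossGrad_le x hx w
    nlinarith [norm_nonneg g]
  apply step_ineq hη hL (expLoss_nonneg x w) hw (sq_nonneg _) hGA
  linarith [hT]

/-- Summability of squared gradient norms under gradient descent on the exponential loss:
partial sums are bounded by `(L(w(0)) − L(w(t+1))) / (η(1 − (η/2)L(w(0))))`, hence the
series converges and its sum is at most `L(w(0)) / (η(1 − (η/2)L(w(0))))`. -/
theorem gd_expLoss_grad_sq_summable
    {d N : ℕ} (x : Fin N → EuclideanSpace ℝ (Fin d))
    (hx : ∀ n, ‖x n‖ ≤ 1)
    (hsep : ∃ wstar : EuclideanSpace ℝ (Fin d), ∀ n, 0 < ⟪wstar, x n⟫)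
    (η : ℝ) (w : ℕ → EuclideanSpace ℝ (Fin d))
    (hη : 0 < η) (hη' : η < 1 / expLoss x (w 0))
    (hGD : ∀ t : ℕ, w (t + 1) = w t - η • expLossGrad x (w t)) :
    (∀ t : ℕ, ∑ i ∈ Finset.range (t + 1), ‖expLossGrad x (w i)‖ ^ 2 ≤
        (expLoss x (w 0) - expLoss x (w (t + 1))) /
          (η * (1 - η / 2 * expLoss x (w 0)))) ∧
    Summable (fun i : ℕ => ‖expLossGrad x (w i)‖ ^ 2) ∧
    ∑' i : ℕ, ‖expLossGrad x (w i)‖ ^ 2 ≤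
      expLoss x (w 0) / (η * (1 - η / 2 * expLoss x (w 0))) := by
  set L₀ := expLoss x (w 0) with hL₀
  have hL0nn : 0 ≤ L₀ := expLoss_nonneg x (w 0)
  have hηL : η * L₀ < 1 := by
    rcases hL0nn.eq_or_lt with h | h
    · rw [← h] at hη'
      simp at hη'
      linarith
    · rw [lt_div_iff₀ h] at hη'
      exact hη'
  set c := η * (1 - η / 2 * L₀) with hc
  have hcpos : 0 < c := by
    have : 0 < 1 - η / 2 * L₀ := by nlinarith
    exact mul_pos hη this
  have hstep : ∀ t, expLoss x (w t) ≤ L₀ →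
      expLoss x (w (t + 1)) ≤ expLoss x (w t) - c * ‖expLossGrad x (w t)‖ ^ 2 := by
    intro t h
    rw [hGD t]
    exact descent_step x hx hη hηL (w t) h
  have hle : ∀ t, expLoss x (w t) ≤ L₀ := by
    intro t
    induction t with
    | zero => exact le_refl _
    | succ t ih =>
        have h1 := hstep t ih
        have h2 : 0 ≤ c * ‖expLossGrad x (w t)‖ ^ 2 := by positivity
        linarith
  have hdec : ∀ t, expLoss x (w (t + 1)) ≤ expLoss x (w t) - c * ‖expLossGrad x (w t)‖ ^ 2 :=
    fun t => hstep t (hle t)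
  have hsum : ∀ t : ℕ, c * ∑ i ∈ Finset.range (t + 1), ‖expLossGrad x (w i)‖ ^ 2 ≤
      L₀ - expLoss x (w (t + 1)) := by
    intro t
    induction t with
    | zero =>
        rw [Finset.sum_range_one]
        have := hdec 0
        linarith
    | succ t ih =>
        rw [Finset.sum_range_succ, mul_add]
        have := hdec (t + 1)
        linarith
  have part1 : ∀ t : ℕ, ∑ i ∈ Finset.range (t + 1), ‖expLossGrad x (w i)‖ ^ 2 ≤
      (L₀ - expLoss x (w (t + 1))) / c := by
    intro t
    rw [le_div_iff₀ hcpos, mul_comm]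
    exact hsum t
  have hnn : ∀ i : ℕ, 0 ≤ ‖expLossGrad x (w i)‖ ^ 2 := fun i => sq_nonneg _
  have hrange : ∀ n : ℕ, ∑ i ∈ Finset.range n, ‖expLossGrad x (w i)‖ ^ 2 ≤ L₀ / c := by
    intro n
    cases n with
    | zero => simp; positivity
    | succ t =>
        calc ∑ i ∈ Finset.range (t + 1), ‖expLossGrad x (w i)‖ ^ 2
            ≤ (L₀ - expLoss x (w (t + 1))) / c := part1 t
          _ ≤ L₀ / c := by
              have h := expLoss_nonneg x (w (t + 1))
              gcongr
              linarith
  exact ⟨part1, summable_of_sum_range_le hnn hrange, Real.tsum_le_of_sum_range_le hnn hrange⟩
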